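/- Let G be a compact group acting continuously on a unital C*-algebra A and on l₂(A) by bounded A-semilinear automorphisms T_g (i.e., T_g(u·a) = T_g(u)·g(a)) with ‖T_g‖ ≤ N for all g ∈ G. Then the averaged inner product ⟨u,v⟩' = ∫_G g⁻¹(⟨T_g u, T_g v⟩) dg defines a norm equivalent to the original one: N⁻¹ ‖u‖ ≤ ‖u‖' ≤ N ‖u‖ for all u ∈ l₂(A), where ‖u‖' = ‖⟨u,u⟩'‖^{1/2}. -/

import Mathlib

open MeasureTheory

section Helpers

variable {A : Type*} [CStarAlgebra A] [PartialOrder A] [StarOrderedRing A]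

lemma starHom_nonneg (ψ : A →+* A) (hψ : ∀ a : A, ψ (star a) = star (ψ a))
    {a : A} (ha : 0 ≤ a) : 0 ≤ ψ a := by
  rw [StarOrderedRing.nonneg_iff] at ha ⊢
  induction ha using AddSubmonoid.closure_induction with
  | mem x hx =>
    obtain ⟨s, rfl⟩ := hx
    exact AddSubmonoid.subset_closure ⟨ψ s, by rw [map_mul, hψ]⟩
  | zero => simpa using AddSubmonoid.zero_mem _
  | add x y _ _ hx hy => simpa [map_add] using AddSubmonoid.add_mem _ hx hy

lemma starHom_mono (ψ : A →+* A) (hψ : ∀ a : A, ψ (star a) = star (ψ a))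
    {a b : A} (hab : a ≤ b) : ψ a ≤ ψ b := by
  have := starHom_nonneg ψ hψ (sub_nonneg.mpr hab)
  rw [map_sub] at this
  exact sub_nonneg.mp this

lemma contHom_fix_algebraMap (ψ : A →+* A) (hc : Continuous ψ) (r : ℝ) :
    ψ (algebraMap ℝ A r) = algebraMap ℝ A r := by
  have key : Set.EqOn (fun r : ℝ => ψ (algebraMap ℝ A r)) (fun r : ℝ => algebraMap ℝ A r)
      (Set.range ((↑) : ℚ → ℝ)) := by
    rintro _ ⟨q, rfl⟩
    have : ψ.comp ((algebraMap ℝ A).comp (Rat.castHom ℝ))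
        = (algebraMap ℝ A).comp (Rat.castHom ℝ) := Subsingleton.elim _ _
    exact DFunLike.congr_fun this q
  have h := Continuous.ext_on Rat.denseRange_cast
    (hc.comp (continuous_algebraMap ℝ A)) (continuous_algebraMap ℝ A) key
  exact congrFun h r

lemma real_smul_nonneg {a : A} (ha : 0 ≤ a) {r : ℝ} (hr : 0 ≤ r) : 0 ≤ r • a := by
  have h := star_mul_self_nonneg (Real.sqrt r • CFC.sqrt a)
  rwa [star_smul, star_trivial, IsSelfAdjoint.of_nonneg (CFC.sqrt_nonneg (a := a)),
    smul_mul_smul_comm, Real.mul_self_sqrt hr, CFC.sqrt_mul_sqrt_self a ha] at h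

lemma algebraMap_nonneg' {r : ℝ} (hr : 0 ≤ r) : 0 ≤ algebraMap ℝ A r := by
  rw [Algebra.algebraMap_eq_smul_one]
  exact real_smul_nonneg (by simpa using star_mul_self_nonneg (1 : A)) hr

lemma algebraMap_mono' {r s : ℝ} (hrs : r ≤ s) :
    algebraMap ℝ A r ≤ algebraMap ℝ A s := by
  have := algebraMap_nonneg' (A := A) (sub_nonneg.mpr hrs)
  rw [map_sub] at this
  exact sub_nonneg.mp this

end Helpers

section Paschke

variable {A : Type*} [CStarAlgebra A] [PartialOrder A] [StarOrderedRing A]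
variable {M : Type*} [NormedAddCommGroup M] [Module A M]

open Filter Topology
open scoped NNReal

lemma paschke_ineq (inner : M → M → A)
    (hsesq : ∀ (a b : A) (u v : M), inner (a • u) (b • v) = b * inner u v * star a)
    (hpos : ∀ u : M, 0 ≤ inner u u)
    (hnorm : ∀ u : M, ‖u‖ = Real.sqrt ‖inner u u‖)
    (σ : A →+* A) (hσstar : ∀ a : A, σ (star a) = star (σ a))
    (hσfix : ∀ r : ℝ, σ (algebraMap ℝ A r) = algebraMap ℝ A r)
    (S : M → M) (hS : ∀ (a : A) (m : M), S (a • m) = σ a • S m)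
    (N : ℝ) (hN : 0 < N) (hSb : ∀ m : M, ‖S m‖ ≤ N * ‖m‖) (w : M) :
    inner (S w) (S w) ≤ (N ^ 2 : ℝ) • σ (inner w w) := by
  set Y := inner (S w) (S w) with hYdef
  set x := inner w w with hxdef
  have hx : 0 ≤ x := hpos w
  have main : ∀ ε : ℝ, 0 < ε → Y ≤ (N ^ 2 : ℝ) • σ x + algebraMap ℝ A (N ^ 2 * ε) := by
    intro ε hε
    set b := x + algebraMap ℝ A ε with hbdef
    have halg : (0 : A) ≤ algebraMap ℝ A ε := algebraMap_nonneg' hε.le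
    have hxb : x ≤ b := le_add_of_nonneg_right halg
    have hb0 : (0 : A) ≤ b := hx.trans hxb
    have hbu : IsUnit b := by
      refine CStarAlgebra.isUnit_of_le _ (le_add_of_nonneg_left hx)
        (IsStrictlyPositive.iff_of_unital.mpr ⟨halg, ?_⟩)
      exact (isUnit_iff_ne_zero.mpr hε.ne').map (algebraMap ℝ A)
    set d := b ^ (-(1 / 2) : ℝ) with hddef
    have hd0 : (0 : A) ≤ d := CFC.rpow_nonneg
    have hds : star d = d := IsSelfAdjoint.of_nonneg hd0
    have hdbd : d * b * d = 1 := CFC.conjugate_rpow_neg_one_half b (IsStrictlyPositive.iff_of_unital.mpr ⟨hb0, hbu⟩)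
    set e := CFC.sqrt b with hedef
    have he0 : (0 : A) ≤ e := CFC.sqrt_nonneg b
    have hes : star e = e := IsSelfAdjoint.of_nonneg he0
    have hspec : (0 : ℝ≥0) ∉ spectrum ℝ≥0 b := (spectrum.zero_notMem_iff (R := ℝ≥0)).mpr hbu
    have hhalf : (1 / 2 : ℝ) + (-(1 / 2)) = 0 := by norm_num
    have hed : e * d = 1 := by
      rw [hedef, CFC.sqrt_eq_rpow, hddef, ← CFC.rpow_add hbu, hhalf, CFC.rpow_zero b hb0]
    have hde : d * e = 1 := by
      have hhalf' : (-(1 / 2) : ℝ) + (1 / 2) = 0 := by norm_num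
      rw [hedef, CFC.sqrt_eq_rpow, hddef, ← CFC.rpow_add hbu, hhalf', CFC.rpow_zero b hb0]
    set m := d • w with hmdef
    have hmm : inner m m = d * x * d := by
      rw [hmdef, hsesq, hds, hxdef]
    have hm1 : inner m m ≤ 1 := by
      rw [hmm, ← hdbd]
      calc d * x * d = star d * x * d := by rw [hds]
        _ ≤ star d * b * d := star_left_conjugate_le_conjugate hxb d
        _ = d * b * d := by rw [hds]
    have hmn : ‖m‖ ≤ 1 := by
      rw [hnorm m]
      refine Real.sqrt_le_one.mpr ?_
      exact (CStarAlgebra.norm_le_one_iff_of_nonneg _ (hpos m)).mpr hm1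
    have hSm : ‖S m‖ ≤ N := by
      have := hSb m
      nlinarith [norm_nonneg (S m)]
    have hSm2 : ‖inner (S m) (S m)‖ ≤ N ^ 2 := by
      have h1 : ‖S m‖ ^ 2 = ‖inner (S m) (S m)‖ := by
        rw [hnorm (S m), Real.sq_sqrt (norm_nonneg _)]
      nlinarith [norm_nonneg (S m)]
    have h5 : inner (S m) (S m) ≤ algebraMap ℝ A (N ^ 2) :=
      le_trans (IsSelfAdjoint.le_algebraMap_norm_self (IsSelfAdjoint.of_nonneg (hpos _)))
        (algebraMap_mono' hSm2)
    have h6 : inner (S m) (S m) = σ d * Y * σ d := by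
      rw [hmdef, hS, hsesq, ← hσstar, hds, hYdef]
    rw [h6] at h5
    have h7 := star_left_conjugate_le_conjugate h5 (σ e)
    have hσes : star (σ e) = σ e := by rw [← hσstar, hes]
    rw [hσes] at h7
    have hL : σ e * (σ d * Y * σ d) * σ e = Y := by
      calc σ e * (σ d * Y * σ d) * σ e = (σ e * σ d) * Y * (σ d * σ e) := by
            simp only [mul_assoc]
        _ = Y := by rw [← map_mul, ← map_mul, hed, hde, map_one, one_mul, mul_one]
    have hR : σ e * algebraMap ℝ A (N ^ 2) * σ e = (N ^ 2 : ℝ) • σ x + algebraMap ℝ A (N ^ 2 * ε) := by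
      have h1 : σ e * algebraMap ℝ A (N ^ 2) * σ e = (N ^ 2 : ℝ) • (σ e * σ e) := by
        rw [Algebra.algebraMap_eq_smul_one, mul_smul_comm, mul_one, smul_mul_assoc]
      rw [h1, ← map_mul, CFC.sqrt_mul_sqrt_self b hb0, hbdef, map_add, smul_add, hσfix,
        Algebra.algebraMap_eq_smul_one, Algebra.algebraMap_eq_smul_one, smul_smul]
    rw [hL, hR] at h7
    exact h7
  have cont : Tendsto (fun ε : ℝ => (N ^ 2 : ℝ) • σ x + algebraMap ℝ A (N ^ 2 * ε)) (𝓝[>] (0 : ℝ))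
      (𝓝 ((N ^ 2 : ℝ) • σ x)) := by
    have hc : Continuous fun ε : ℝ => (N ^ 2 : ℝ) • σ x + algebraMap ℝ A (N ^ 2 * ε) :=
      continuous_const.add ((continuous_algebraMap ℝ A).comp (continuous_const.mul continuous_id))
    have h0 := hc.tendsto 0
    simp only [mul_zero, map_zero, add_zero] at h0
    exact h0.mono_left nhdsWithin_le_nhds
  refine ge_of_tendsto cont ?_
  filter_upwards [self_mem_nhdsWithin] with ε hε using main ε hε

end Paschke


/-- Let a compact group `G` act continuously on a unital C*-algebra `A`
(via *-automorphisms `φ`) and on `l₂(A)` — here modelled by a Hilbert `A`-module `M` whose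
norm satisfies `‖u‖ = ‖⟨u,u⟩‖^{1/2}` — by bounded `A`-semilinear automorphisms `T g`
(`T g (a • u) = φ g a • T g u`) with `‖T g u‖ ≤ N ‖u‖` for all `g`.  Then the averaged
inner product `⟨u,v⟩' = ∫_G g⁻¹ ⟨T g u, T g v⟩ dg` defines a norm equivalent to the original
one: `N⁻¹ ‖u‖ ≤ ‖u‖' ≤ N ‖u‖`, where `‖u‖' = ‖⟨u,u⟩'‖^{1/2}`. -/
theorem averaged_norm_equivalent
    {G : Type*} [Group G] [TopologicalSpace G] [IsTopologicalGroup G] [CompactSpace G]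
    [MeasurableSpace G] [BorelSpace G]
    (μ : Measure G) [μ.IsHaarMeasure] [IsProbabilityMeasure μ]
    {A : Type*} [CStarAlgebra A] [PartialOrder A] [StarOrderedRing A]
    (φ : G →* RingAut A) (hstar : ∀ g (a : A), φ g (star a) = star (φ g a))
    (hφcont : Continuous fun p : G × A => φ p.1 p.2)
    {M : Type*} [NormedAddCommGroup M] [Module A M]
    (inner : M → M → A)
    (hsesq : ∀ (a b : A) (u v : M), inner (a • u) (b • v) = b * inner u v * star a)
    (hadd : ∀ u v w : M, inner (u + v) w = inner u w + inner v w)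
    (hherm : ∀ u v : M, star (inner u v) = inner v u)
    (hpos : ∀ u : M, 0 ≤ inner u u)
    (hnorm : ∀ u : M, ‖u‖ = Real.sqrt ‖inner u u‖)
    (T : G → M → M)
    (hTadd : ∀ g (x y : M), T g (x + y) = T g x + T g y)
    (hTbij : ∀ g, Function.Bijective (T g))
    (hTsmul : ∀ g (a : A) (m : M), T g (a • m) = (φ g a) • T g m)
    (hTone : ∀ m : M, T 1 m = m)
    (hTmul : ∀ g h (m : M), T (g * h) m = T g (T h m))
    (hcont : ∀ u v : M, Continuous fun g : G => (φ g)⁻¹ (inner (T g u) (T g v)))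
    (N : ℝ) (hN : 0 < N) (hbound : ∀ (g : G) (u : M), ‖T g u‖ ≤ N * ‖u‖)
    (u : M) :
    N⁻¹ * ‖u‖ ≤ Real.sqrt ‖∫ g, (φ g)⁻¹ (inner (T g u) (T g u)) ∂μ‖ ∧
      Real.sqrt ‖∫ g, (φ g)⁻¹ (inner (T g u) (T g u)) ∂μ‖ ≤ N * ‖u‖ := by
  --
  set F : G → A := fun g => (φ g)⁻¹ (inner (T g u) (T g u)) with hF
  have hφcontg : ∀ g : G, Continuous fun a : A => φ g a := fun g =>
    hφcont.comp (Continuous.prodMk_right g)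
  have hfix : ∀ (g : G) (r : ℝ), φ g (algebraMap ℝ A r) = algebraMap ℝ A r := fun g r =>
    contHom_fix_algebraMap (φ g).toRingHom (hφcontg g) r
  have hmono : ∀ (g : G) {a b : A}, a ≤ b → φ g a ≤ φ g b := by
    intro g a b hab
    exact starHom_mono (φ g).toRingHom (hstar g) hab
  have hFval : ∀ g : G, F g = φ g⁻¹ (inner (T g u) (T g u)) := fun g => by
    rw [map_inv]
  have hFpos : ∀ g : G, 0 ≤ F g := fun g => by
    rw [hFval g]
    exact starHom_nonneg (φ g⁻¹).toRingHom (hstar g⁻¹) (hpos _)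
  have hval : ∀ m : M, ‖m‖ ^ 2 = ‖inner m m‖ := fun m => by
    rw [hnorm m]; exact Real.sq_sqrt (norm_nonneg _)
  have hinle : ∀ g : G, inner (T g u) (T g u) ≤ algebraMap ℝ A (N ^ 2 * ‖u‖ ^ 2) := by
    intro g
    refine le_trans (IsSelfAdjoint.le_algebraMap_norm_self (.of_nonneg (hpos _)))
      (algebraMap_mono' ?_)
    have h1 := hval (T g u)
    nlinarith [hbound g u, norm_nonneg u, norm_nonneg (T g u)]
  have hFle : ∀ g : G, F g ≤ algebraMap ℝ A (N ^ 2 * ‖u‖ ^ 2) := fun g => by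
    rw [hFval g]
    calc φ g⁻¹ (inner (T g u) (T g u)) ≤ φ g⁻¹ (algebraMap ℝ A (N ^ 2 * ‖u‖ ^ 2)) :=
          hmono g⁻¹ (hinle g)
      _ = algebraMap ℝ A (N ^ 2 * ‖u‖ ^ 2) := hfix g⁻¹ _
  have hFnorm : ∀ g : G, ‖F g‖ ≤ N ^ 2 * ‖u‖ ^ 2 := fun g =>
    (CStarAlgebra.norm_le_iff_le_algebraMap (F g) (by positivity) (hFpos g)).mpr (hFle g)
  have hIc : Continuous F := hcont u u
  have hInt : Integrable F μ :=
    hIc.integrable_of_hasCompactSupport (HasCompactSupport.of_compactSpace _)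
  have hIle : ‖∫ g, F g ∂μ‖ ≤ N ^ 2 * ‖u‖ ^ 2 := by
    have h := norm_integral_le_of_norm_le_const (μ := μ) (f := F) (ae_of_all _ hFnorm)
    simpa [measure_univ] using h
  have hkey : ∀ g : G, inner u u ≤ (N ^ 2 : ℝ) • F g := by
    intro g
    have hyp := paschke_ineq inner hsesq hpos hnorm (φ g⁻¹).toRingHom (hstar g⁻¹)
      (fun r => hfix g⁻¹ r) (T g⁻¹) (fun a m => hTsmul g⁻¹ a m) N hN (hbound g⁻¹) (T g u)
    rw [← hTmul, inv_mul_cancel, hTone] at hyp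
    rw [hFval g]
    exact hyp
  have hsubInt : Integrable (fun g => (N ^ 2 : ℝ) • F g - inner u u) μ :=
    (hInt.smul (N ^ 2 : ℝ)).sub (integrable_const _)
  have hmem : (0 : A) ≤ ∫ g, ((N ^ 2 : ℝ) • F g - inner u u) ∂μ := by
    have hconv : Convex ℝ {a : A | 0 ≤ a} := fun x hx y hy a b ha hb _ =>
      add_nonneg (real_smul_nonneg hx ha) (real_smul_nonneg hy hb)
    exact hconv.integral_mem CStarAlgebra.isClosed_nonneg
      (ae_of_all _ fun g => sub_nonneg.mpr (hkey g)) hsubInt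
  have hsmulInt : Integrable (fun g => (N ^ 2 : ℝ) • F g) μ := hInt.smul _
  rw [integral_sub hsmulInt (integrable_const _), integral_smul, integral_const,
    probReal_univ, one_smul, sub_nonneg] at hmem
  have hn2 : ‖inner u u‖ ≤ N ^ 2 * ‖∫ g, F g ∂μ‖ := by
    have h := CStarAlgebra.norm_le_norm_of_nonneg_of_le (hpos u) hmem
    rwa [norm_smul, Real.norm_eq_abs, abs_of_nonneg (by positivity)] at h
  have hI0 : (0 : ℝ) ≤ ‖∫ g, F g ∂μ‖ := norm_nonneg _
  constructor
  · have h1 : ‖u‖ ^ 2 ≤ N ^ 2 * ‖∫ g, F g ∂μ‖ := (hval u).symm ▸ ((hval u) ▸ hn2)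
    have h2 : ‖u‖ ≤ N * Real.sqrt ‖∫ g, F g ∂μ‖ := by
      calc ‖u‖ = Real.sqrt (‖u‖ ^ 2) := (Real.sqrt_sq (norm_nonneg u)).symm
        _ ≤ Real.sqrt (N ^ 2 * ‖∫ g, F g ∂μ‖) := Real.sqrt_le_sqrt h1
        _ = N * Real.sqrt ‖∫ g, F g ∂μ‖ := by
            rw [Real.sqrt_mul (sq_nonneg N), Real.sqrt_sq hN.le]
    calc N⁻¹ * ‖u‖ ≤ N⁻¹ * (N * Real.sqrt ‖∫ g, F g ∂μ‖) :=
          mul_le_mul_of_nonneg_left h2 (inv_nonneg.mpr hN.le)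
      _ = Real.sqrt ‖∫ g, F g ∂μ‖ := by field_simp
  · calc Real.sqrt ‖∫ g, F g ∂μ‖ ≤ Real.sqrt (N ^ 2 * ‖u‖ ^ 2) := Real.sqrt_le_sqrt hIle
      _ = N * ‖u‖ := by
          rw [Real.sqrt_mul (sq_nonneg N), Real.sqrt_sq hN.le, Real.sqrt_sq (norm_nonneg u)]
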